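/- In a propositional resolution proof, if in every path from a node η to the root there is a resolution step with pivot p where the p-side premise lies on the path (i.e., p is 'safe' for η), then deleting an occurrence of p from the clause at η still yields (after fixing the proof) a root clause that subsumes the original root clause. -/

import Mathlib

/-- Propositional literals over atoms `A`. -/
inductive PLit (A : Type) : Type
  | pos : A → PLit A
  | neg : A → PLit A
deriving DecidableEq

variable {A : Type} [DecidableEq A]

/-- Propositional resolution proofs (as trees), indexed by their conclusion clause.
Leaves are input clauses; a resolution node with pivot `p` derives
`(Cl \ {p}) ∪ (Cr \ {¬p})` from a left premise `Cl` (contributing `p`) and a right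
premise `Cr` (contributing `¬p`). -/
inductive Prf (A : Type) [DecidableEq A] : Finset (PLit A) → Type
  | ax : (C : Finset (PLit A)) → Prf A C
  | res : {Cl Cr : Finset (PLit A)} → (p : A) →
      Prf A Cl → Prf A Cr → Prf A ((Cl.erase (.pos p)) ∪ (Cr.erase (.neg p)))

/-- The subproof at a path (list of directions from the root; `false` = left premise,
`true` = right premise), if the path is valid. -/
def subAt : {C : Finset (PLit A)} → Prf A C → List Bool →
    Option ((D : Finset (PLit A)) × Prf A D)
  | C, π, [] => some ⟨C, π⟩
  | _, .res _ πl _, false :: s => subAt πl s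
  | _, .res _ _ πr, true :: s => subAt πr s
  | _, .ax _, _ :: _ => none

/-- The literal `ℓ` is safe for the node at path `s`: on (every =) the path from the
node to the root there is a resolution step with pivot `|ℓ|` whose `ℓ`-side premise
lies on the path (so `ℓ` is resolved away there). -/
def SafeAt : {C : Finset (PLit A)} → Prf A C → List Bool → PLit A → Prop
  | _, .res p πl _, false :: s, ℓ => ℓ = PLit.pos p ∨ SafeAt πl s ℓ
  | _, .res p _ πr, true :: s, ℓ => ℓ = PLit.neg p ∨ SafeAt πr s ℓ
  | _, _, _, _ => False

/-- Replace the subproof at path `s` by the proof `r` and fix the proof below: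
each resolution on the path is rebuilt, and a resolution whose pivot no longer
occurs in the fixed premise is dropped (replaced by that premise). -/
def fixAt : {C : Finset (PLit A)} → Prf A C → List Bool →
    ((D : Finset (PLit A)) × Prf A D) → ((D : Finset (PLit A)) × Prf A D)
  | _, _, [], r => r
  | _, .res p πl πr, false :: s, r =>
      let x := fixAt πl s r
      if PLit.pos p ∈ x.1 then ⟨_, .res p x.2 πr⟩ else x
  | _, .res p πl πr, true :: s, r =>
      let x := fixAt πr s r
      if PLit.neg p ∈ x.1 then ⟨_, .res p πl x.2⟩ else x
  | C, π, _ :: _, _ => ⟨C, π⟩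

theorem fix_weak :
    ∀ (s : List Bool) {C : Finset (PLit A)} (π : Prf A C)
      (r : (D : Finset (PLit A)) × Prf A D)
      {Cη : Finset (PLit A)} (η : Prf A Cη)
      (hsub : subAt π s = some ⟨Cη, η⟩) (p : PLit A)
      (hr : r.1 ⊆ Cη),
      (fixAt π s r).1 ⊆ C ∪ {p} := by
  intro s
  induction s with
  | nil =>
    intro C π r Cη η hsub p hr
    simp [subAt] at hsub
    obtain ⟨h1, _⟩ := hsub
    subst h1
    simpa [fixAt] using hr.trans (Finset.subset_union_left : C ⊆ C ∪ {p})
  | cons b s ih =>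
    intro C π r Cη η hsub p hr
    cases π with
    | ax D => simp [subAt] at hsub
    | res q πl πr =>
      cases b with
      | false =>
        simp only [subAt] at hsub
        have hx := ih πl r η hsub p hr
        simp only [fixAt]
        split
        · next hmem =>
          intro ℓ hℓ
          simp only [Finset.mem_union, Finset.mem_erase] at hℓ ⊢
          rcases hℓ with ⟨hne, hℓ⟩ | hℓ
          · rcases Finset.mem_union.1 (hx hℓ) with h | h
            · exact Or.inl (Or.inl ⟨hne, h⟩)
            · exact Or.inr h
          · exact Or.inl (Or.inr hℓ)
        · next hmem =>
          intro ℓ hℓ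
          have hne : ℓ ≠ PLit.pos q := fun h => hmem (h ▸ hℓ)
          rcases Finset.mem_union.1 (hx hℓ) with h | h
          · exact Finset.mem_union_left _ (Finset.mem_union_left _ (Finset.mem_erase.2 ⟨hne, h⟩))
          · exact Finset.mem_union_right _ h
      | true =>
        simp only [subAt] at hsub
        have hx := ih πr r η hsub p hr
        simp only [fixAt]
        split
        · next hmem =>
          intro ℓ hℓ
          simp only [Finset.mem_union, Finset.mem_erase] at hℓ ⊢
          rcases hℓ with hℓ | ⟨hne, hℓ⟩
          · exact Or.inl (Or.inl hℓ)
          · rcases Finset.mem_union.1 (hx hℓ) with h | h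
            · exact Or.inl (Or.inr ⟨hne, h⟩)
            · exact Or.inr h
        · next hmem =>
          intro ℓ hℓ
          have hne : ℓ ≠ PLit.neg q := fun h => hmem (h ▸ hℓ)
          rcases Finset.mem_union.1 (hx hℓ) with h | h
          · exact Finset.mem_union_left _ (Finset.mem_union_right _ (Finset.mem_erase.2 ⟨hne, h⟩))
          · exact Finset.mem_union_right _ h

theorem fix_safe :
    ∀ (s : List Bool) {C : Finset (PLit A)} (π : Prf A C)
      (r : (D : Finset (PLit A)) × Prf A D)
      {Cη : Finset (PLit A)} (η : Prf A Cη)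
      (hsub : subAt π s = some ⟨Cη, η⟩) (p : PLit A)
      (hr : r.1 ⊆ Cη) (hsafe : SafeAt π s p),
      (fixAt π s r).1 ⊆ C := by
  intro s
  induction s with
  | nil =>
    intro C π r Cη η hsub p hr hsafe
    cases π <;> simp [SafeAt] at hsafe
  | cons b s ih =>
    intro C π r Cη η hsub p hr hsafe
    cases π with
    | ax D => simp [subAt] at hsub
    | @res Cl Cr q πl πr =>
      cases b with
      | false =>
        simp only [subAt] at hsub
        simp only [SafeAt] at hsafe
        have hx : (fixAt πl s r).1 ⊆ Cl ∪ {PLit.pos q} := by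
          rcases hsafe with rfl | hs
          · exact fix_weak s πl r η hsub _ hr
          · exact (ih πl r η hsub p hr hs).trans Finset.subset_union_left
        simp only [fixAt]
        split
        · next hmem =>
          intro ℓ hℓ
          simp only [Finset.mem_union, Finset.mem_erase] at hℓ ⊢
          rcases hℓ with ⟨hne, hℓ⟩ | hℓ
          · rcases Finset.mem_union.1 (hx hℓ) with h | h
            · exact Or.inl ⟨hne, h⟩
            · exact absurd (Finset.mem_singleton.1 h) hne
          · exact Or.inr hℓ
        · next hmem =>
          intro ℓ hℓ
          have hne : ℓ ≠ PLit.pos q := fun h => hmem (h ▸ hℓ)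
          rcases Finset.mem_union.1 (hx hℓ) with h | h
          · exact Finset.mem_union_left _ (Finset.mem_erase.2 ⟨hne, h⟩)
          · exact absurd (Finset.mem_singleton.1 h) hne
      | true =>
        simp only [subAt] at hsub
        simp only [SafeAt] at hsafe
        have hx : (fixAt πr s r).1 ⊆ Cr ∪ {PLit.neg q} := by
          rcases hsafe with rfl | hs
          · exact fix_weak s πr r η hsub _ hr
          · exact (ih πr r η hsub p hr hs).trans Finset.subset_union_left
        simp only [fixAt]
        split
        · next hmem =>
          intro ℓ hℓ
          simp only [Finset.mem_union, Finset.mem_erase] at hℓ ⊢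
          rcases hℓ with hℓ | ⟨hne, hℓ⟩
          · exact Or.inl hℓ
          · rcases Finset.mem_union.1 (hx hℓ) with h | h
            · exact Or.inr ⟨hne, h⟩
            · exact absurd (Finset.mem_singleton.1 h) hne
        · next hmem =>
          intro ℓ hℓ
          have hne : ℓ ≠ PLit.neg q := fun h => hmem (h ▸ hℓ)
          rcases Finset.mem_union.1 (hx hℓ) with h | h
          · exact Finset.mem_union_right _ (Finset.mem_erase.2 ⟨hne, h⟩)
          · exact absurd (Finset.mem_singleton.1 h) hne


/-- In a propositional resolution proof, if in every path from a node `η`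
to the root there is a resolution step with pivot `p` where the `p`-side premise lies on
the path (i.e., `p` is safe for `η`), then deleting an occurrence of `p` from the clause
at `η` still yields, after fixing the proof, a root clause that subsumes the original
root clause (propositional subsumption being set inclusion). -/
theorem regularization_subsumes {C : Finset (PLit A)} (π : Prf A C)
    (s : List Bool) (Cη : Finset (PLit A)) (η : Prf A Cη)
    (hsub : subAt π s = some ⟨Cη, η⟩)
    (p : PLit A) (hp : p ∈ Cη) (hsafe : SafeAt π s p) :
    (fixAt π s ⟨Cη.erase p, Prf.ax (Cη.erase p)⟩).1 ⊆ C := by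
  exact fix_safe s π _ η hsub p (Finset.erase_subset _ _) hsafe
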